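/- Let R be a TRS over a signature Σ with the property that every ground term is weakly normalizing if and only if it is strongly normalizing, and let N be the set of normalizing ground terms. Then: (i) each congruence class of the Nerode congruence ~_N is closed under R-rewriting and under R-expansion, i.e., whenever t₁ →_R t₂ for ground terms t₁, t₂, then t₁ ~_N t₂; and (ii) the complement of N is one congruence class of ~_N, i.e., any two ground terms not in N are ~_N-equivalent, and no ground term outside N is ~_N-equivalent to a term in N. -/
import Mathlib


namespace LocalTerm

/-- Terms over a signature `F` with arities `ar` and variables `X`. -/
inductive Tm (F : Type) (ar : F → ℕ) (X : Type) : Type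
  | var : X → Tm F ar X
  | app : (f : F) → (Fin (ar f) → Tm F ar X) → Tm F ar X

/-- Substitution. -/
def subst {F : Type} {ar : F → ℕ} {X Y : Type} (σ : X → Tm F ar Y) :
    Tm F ar X → Tm F ar Y
  | .var x => σ x
  | .app f ts => .app f fun i => subst σ (ts i)

/-- One-step rewrite relation of a set `R` of rules (over variables `X`),
acting on terms over variables `V`: a rule instance inside a one-hole context. -/
inductive Rw {F : Type} {ar : F → ℕ} {X V : Type}
    (R : Set (Tm F ar X × Tm F ar X)) : Tm F ar V → Tm F ar V → Prop
  | rule {l r : Tm F ar X} (h : (l, r) ∈ R) (σ : X → Tm F ar V) :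
      Rw R (subst σ l) (subst σ r)
  | ctxt {f : F} {ts : Fin (ar f) → Tm F ar V} (i : Fin (ar f)) {t' : Tm F ar V} :
      Rw R (ts i) t' → Rw R (Tm.app f ts) (Tm.app f (Function.update ts i t'))

/-- The set of variables of a term. -/
def Vars {F : Type} {ar : F → ℕ} {X : Type} : Tm F ar X → Set X
  | .var x => {x}
  | .app _ ts => ⋃ i, Vars (ts i)

/-- `R` is a TRS: no left-hand side is a variable,
and all variables of a right-hand side occur in the left-hand side. -/
def IsTRS {F : Type} {ar : F → ℕ} {X : Type}
    (R : Set (Tm F ar X × Tm F ar X)) : Prop :=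
  ∀ p ∈ R, (∀ x : X, p.1 ≠ Tm.var x) ∧ Vars p.2 ⊆ Vars p.1

/-- A partial interpretation of the function symbols in a set `A`:
for every `n`-ary symbol a partial function `Aⁿ ⇀ A`. -/
abbrev Interp (F : Type) (ar : F → ℕ) (A : Type) : Type :=
  ∀ f : F, (Fin (ar f) → A) → Option A

/-- `Eval I α t a` : the (partial) interpretation of `t` under assignment `α`
is defined and equal to `a`. -/
inductive Eval {F : Type} {ar : F → ℕ} {X A : Type}
    (I : Interp F ar A) (α : X → A) : Tm F ar X → A → Prop
  | var (x : X) : Eval I α (Tm.var x) (α x)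
  | app {f : F} {ts : Fin (ar f) → Tm F ar X} (as : Fin (ar f) → A) {a : A}
      (hts : ∀ i, Eval I α (ts i) (as i)) (hI : I f as = some a) :
      Eval I α (Tm.app f ts) a

/-- A set `T` of ground terms is defined if the interpretation of
every `t ∈ T` is defined. -/
def DefinedOn {F : Type} {ar : F → ℕ} {A : Type}
    (I : Interp F ar A) (T : Set (Tm F ar Empty)) : Prop :=
  ∀ t ∈ T, ∃ a : A, Eval I Empty.elim t a

/-- `succ` is a partial model for `R`: whenever the interpretation of a
left-hand side is defined, the right-hand side is defined as well and the
interpretations are related by `succ`. -/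
def PartialModel {F : Type} {ar : F → ℕ} {X A : Type}
    (I : Interp F ar A) (succ : A → A → Prop)
    (R : Set (Tm F ar X × Tm F ar X)) : Prop :=
  ∀ p ∈ R, ∀ (α : X → A) (a : A), Eval I α p.1 a →
    ∃ b : A, Eval I α p.2 b ∧ succ a b

/-- A partial function is closed w.r.t. a relation. -/
def ClosedFn {A : Type} {n : ℕ} (g : (Fin n → A) → Option A)
    (r : A → A → Prop) : Prop :=
  ∀ (v : Fin n → A) (i : Fin n) (b : A), r (v i) b → (g v).isSome →
    (g (Function.update v i b)).isSome

/-- A partial function is monotone w.r.t. a relation. -/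
def MonoFn {A : Type} {n : ℕ} (g : (Fin n → A) → Option A)
    (r : A → A → Prop) : Prop :=
  ∀ (v : Fin n → A) (i : Fin n) (b : A) (x y : A), r (v i) b →
    g v = some x → g (Function.update v i b) = some y → r x y

/-- `(A, I, r)` is a monotone partial algebra: every interpretation is
closed and monotone with respect to `r`. -/
def MonoAlg {F : Type} {ar : F → ℕ} {A : Type}
    (I : Interp F ar A) (r : A → A → Prop) : Prop :=
  ∀ f : F, ClosedFn (I f) r ∧ MonoFn (I f) r

/-- Well-foundedness: no infinite descending sequence. -/
def WFrel {A : Type} (r : A → A → Prop) : Prop :=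
  ¬ ∃ f : ℕ → A, ∀ n : ℕ, r (f n) (f (n + 1))

/-- `r` is terminating on `T`: no element of `T` starts an infinite `r`-sequence. -/
def SNon {B : Type} (r : B → B → Prop) (T : Set B) : Prop :=
  ∀ t ∈ T, ¬ ∃ f : ℕ → B, f 0 = t ∧ ∀ n : ℕ, r (f n) (f (n + 1))

/-- Relative termination on `T`: no element of `T` starts an infinite
`(r ∪ s)`-sequence containing infinitely many `r`-steps. -/
def SNrelOn {B : Type} (r s : B → B → Prop) (T : Set B) : Prop :=
  ∀ t ∈ T, ¬ ∃ f : ℕ → B, f 0 = t ∧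
    (∀ n : ℕ, r (f n) (f (n + 1)) ∨ s (f n) (f (n + 1))) ∧
    (∀ m : ℕ, ∃ n : ℕ, m ≤ n ∧ r (f n) (f (n + 1)))

/-- Relative termination (on everything). -/
def SNrel {B : Type} (r s : B → B → Prop) : Prop := SNrelOn r s Set.univ


/-- Subterm relation. -/
inductive Subt {F : Type} {ar : F → ℕ} {X : Type} :
    Tm F ar X → Tm F ar X → Prop
  | refl (t : Tm F ar X) : Subt t t
  | app {s : Tm F ar X} {f : F} {ts : Fin (ar f) → Tm F ar X} (i : Fin (ar f)) :
      Subt s (ts i) → Subt s (Tm.app f ts)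

/-- A ground term is an `R`-normal form: it contains no instance of a
left-hand side of `R` as a subterm. -/
def IsNormalForm {F : Type} {ar : F → ℕ} {X : Type}
    (R : Set (Tm F ar X × Tm F ar X)) (t : Tm F ar Empty) : Prop :=
  ¬ ∃ p ∈ R, ∃ σ : X → Tm F ar Empty, Subt (subst σ p.1) t

/-- Weak normalisation of a ground term: it reduces to a normal form. -/
def WN {F : Type} {ar : F → ℕ} {X : Type}
    (R : Set (Tm F ar X × Tm F ar X)) (t : Tm F ar Empty) : Prop :=
  ∃ u : Tm F ar Empty, Relation.ReflTransGen (Rw R) t u ∧ IsNormalForm R u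

/-- Strong normalisation of a ground term: no infinite rewrite sequence. -/
def SN {F : Type} {ar : F → ℕ} {X : Type}
    (R : Set (Tm F ar X × Tm F ar X)) (t : Tm F ar Empty) : Prop :=
  ¬ ∃ f : ℕ → Tm F ar Empty, f 0 = t ∧ ∀ n : ℕ, Rw R (f n) (f (n + 1))

/-- Number of variable occurrences of a term over a single variable. -/
def countVar {F : Type} {ar : F → ℕ} : Tm F ar Unit → ℕ
  | .var _ => 1
  | .app _ ts => ∑ i, countVar (ts i)

/-- A ground one-hole context: a term over one variable (the hole) with
exactly one occurrence of it. -/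
def OneHole {F : Type} {ar : F → ℕ} (C : Tm F ar Unit) : Prop :=
  countVar C = 1

/-- Plugging a ground term into a context. -/
def plug {F : Type} {ar : F → ℕ} (C : Tm F ar Unit) (t : Tm F ar Empty) :
    Tm F ar Empty :=
  subst (fun _ => t) C

/-- The Nerode congruence of a set `N` of ground terms. -/
def Nerode {F : Type} {ar : F → ℕ} (N : Set (Tm F ar Empty))
    (t1 t2 : Tm F ar Empty) : Prop :=
  ∀ C : Tm F ar Unit, OneHole C → (plug C t1 ∈ N ↔ plug C t2 ∈ N)

lemma subst_eq_of_countVar_zero {F : Type} {ar : F → ℕ}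
    (σ τ : Unit → Tm F ar Empty) :
    ∀ s : Tm F ar Unit, countVar s = 0 → subst σ s = subst τ s := by
  intro s
  induction s with
  | var x => intro h; simp [countVar] at h
  | app f ts ih =>
    intro h
    simp only [countVar, Finset.sum_eq_zero_iff, Finset.mem_univ,
      forall_true_left] at h
    simp only [subst]
    congr 1
    funext i
    exact ih i (h i)

lemma rw_plug {F : Type} {ar : F → ℕ} {X : Type}
    (R : Set (Tm F ar X × Tm F ar X)) {t1 t2 : Tm F ar Empty}
    (h : Rw R t1 t2) :
    ∀ C : Tm F ar Unit, OneHole C → Rw R (plug C t1) (plug C t2) := by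
  intro C
  induction C with
  | var u => intro _; exact h
  | app f ts ih =>
    intro hC
    unfold OneHole countVar at hC
    obtain ⟨i, hi⟩ : ∃ i, countVar (ts i) ≠ 0 := by
      by_contra hall
      push_neg at hall
      rw [Finset.sum_eq_zero (fun i _ => hall i)] at hC
      exact one_ne_zero hC.symm
    have hsplit : countVar (ts i) + ∑ j ∈ Finset.univ.erase i, countVar (ts j)
        = ∑ j, countVar (ts j) := Finset.add_sum_erase Finset.univ
      (fun j => countVar (ts j)) (Finset.mem_univ i)
    have hone : countVar (ts i) = 1 := by omega
    have hrest : ∑ j ∈ Finset.univ.erase i, countVar (ts j) = 0 := by omega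
    have hj : ∀ j, j ≠ i → countVar (ts j) = 0 := by
      intro j hne
      have := (Finset.sum_eq_zero_iff.mp hrest) j
        (Finset.mem_erase.mpr ⟨hne, Finset.mem_univ j⟩)
      exact this
    have hstep := Rw.ctxt (R := R) (f := f)
      (ts := fun j => plug (ts j) t1) i (ih i hone)
    have hupd : Function.update (fun j => plug (ts j) t1) i (plug (ts i) t2)
        = fun j => plug (ts j) t2 := by
      funext j
      rcases eq_or_ne j i with rfl | hne
      · simp
      · rw [Function.update_of_ne hne]
        exact subst_eq_of_countVar_zero _ _ (ts j) (hj j hne)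
    rw [hupd] at hstep
    exact hstep

lemma sn_of_rw {F : Type} {ar : F → ℕ} {X : Type}
    {R : Set (Tm F ar X × Tm F ar X)} {t t' : Tm F ar Empty}
    (h : Rw R t t') (hsn : SN R t) : SN R t' := by
  rintro ⟨f, hf0, hf⟩
  apply hsn
  refine ⟨fun n => Nat.rec t (fun n _ => f n) n, rfl, ?_⟩
  intro n
  cases n with
  | zero => simpa [hf0] using h
  | succ n => exact hf n

lemma not_sn_plug {F : Type} {ar : F → ℕ} {X : Type}
    {R : Set (Tm F ar X × Tm F ar X)} {t : Tm F ar Empty}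
    {C : Tm F ar Unit} (hC : OneHole C) (hsn : ¬ SN R t) :
    ¬ SN R (plug C t) := by
  intro hCsn
  obtain ⟨f, hf0, hf⟩ := not_not.mp hsn
  exact hCsn ⟨fun n => plug C (f n), by simp only []; rw [hf0],
    fun n => rw_plug R (hf n) C hC⟩

/-- If for the TRS `R` every ground term is weakly
normalizing iff it is strongly normalizing, and `N` is the set of normalizing
ground terms, then (i) each `~_N` congruence class is closed under rewriting
and expansion, and (ii) the complement of `N` is a single `~_N` class. -/
theorem nerode_classes_of_WN_eq_SN
    {F X : Type} {ar : F → ℕ}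
    (R : Set (Tm F ar X × Tm F ar X)) (hR : IsTRS R)
    (hWS : ∀ t : Tm F ar Empty, WN R t ↔ SN R t) :
    (∀ t1 t2 : Tm F ar Empty, Rw R t1 t2 →
        Nerode {t : Tm F ar Empty | WN R t} t1 t2) ∧
    (∀ t1 t2 : Tm F ar Empty, ¬ WN R t1 → ¬ WN R t2 →
        Nerode {t : Tm F ar Empty | WN R t} t1 t2) ∧
    (∀ t1 t2 : Tm F ar Empty, ¬ WN R t1 → WN R t2 →
        ¬ Nerode {t : Tm F ar Empty | WN R t} t1 t2) := by
  refine ⟨?_, ?_, ?_⟩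
  · intro t1 t2 h C hC
    have hstep := rw_plug R h C hC
    constructor
    · intro h1
      exact (hWS _).mpr (sn_of_rw hstep ((hWS _).mp h1))
    · rintro ⟨u, hu, hnf⟩
      exact ⟨u, Relation.ReflTransGen.head hstep hu, hnf⟩
  · intro t1 t2 h1 h2 C hC
    have n1 : ¬ WN R (plug C t1) := fun hw =>
      not_sn_plug hC (fun hs => h1 ((hWS _).mpr hs)) ((hWS _).mp hw)
    have n2 : ¬ WN R (plug C t2) := fun hw =>
      not_sn_plug hC (fun hs => h2 ((hWS _).mpr hs)) ((hWS _).mp hw)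
    exact iff_of_false n1 n2
  · intro t1 t2 h1 h2 hN
    have hhole : OneHole (Tm.var () : Tm F ar Unit) := rfl
    have := hN (Tm.var ()) hhole
    exact h1 (this.mpr h2)

end LocalTerm
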